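/- Let K_x and M_x be real symmetric positive definite n×n matrices, α > 0 and β ∈ ℝ, and set 𝒦 := K_x + α M_x. Define the 2n×2n block matrices Ā := [[𝒦, β M_x], [β M_x, −𝒦]] and P := [[𝒦 + |β| M_x, 0], [0, 𝒦 + |β| M_x]]. Then every generalized eigenvalue λ of the pencil (Ā, P), i.e. every λ ∈ ℝ such that Ā u = λ P u for some nonzero u ∈ ℝ^{2n}, satisfies 1/√2 ≤ |λ| ≤ 1; consequently the condition number of P⁻¹Ā in the P-norm is at most √2. (Theorem on the preconditioner for the diagonalization case, in the sharpened form of the accompanying Remark.) -/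

import Mathlib

open Matrix

private lemma psd_smul' {m : Type*} [Fintype m] {c : ℝ} {M : Matrix m m ℝ}
    (hc : 0 ≤ c) (hM : M.PosSemidef) : (c • M).PosSemidef := by
  refine Matrix.posSemidef_iff_dotProduct_mulVec.mpr ⟨?_, fun x => ?_⟩
  · unfold Matrix.IsHermitian
    rw [conjTranspose_smul, hM.1.eq, star_trivial]
  · rw [smul_mulVec, dotProduct_smul, smul_eq_mul]
    exact mul_nonneg hc (hM.dotProduct_mulVec_nonneg x)

private lemma psd_blockDiag' {m : Type*} [Fintype m] [DecidableEq m] {A D : Matrix m m ℝ}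
    (hA : A.PosSemidef) (hD : D.PosSemidef) : (Matrix.fromBlocks A 0 0 D).PosSemidef := by
  refine Matrix.posSemidef_iff_dotProduct_mulVec.mpr ⟨Matrix.IsHermitian.fromBlocks hA.1 (by simp) hD.1, fun x => ?_⟩
  rw [Matrix.fromBlocks_mulVec]
  simp only [Matrix.zero_mulVec, add_zero, zero_add]
  have hx : star x = Sum.elim (star (x ∘ Sum.inl)) (star (x ∘ Sum.inr)) := by
    funext i; cases i <;> rfl
  rw [hx, sumElim_dotProduct_sumElim]
  exact add_nonneg (hA.dotProduct_mulVec_nonneg _) (hD.dotProduct_mulVec_nonneg _)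

private lemma pd_blockDiag' {m : Type*} [Fintype m] [DecidableEq m] {A D : Matrix m m ℝ}
    (hA : A.PosDef) (hD : D.PosDef) : (Matrix.fromBlocks A 0 0 D).PosDef := by
  refine Matrix.posDef_iff_dotProduct_mulVec.mpr ⟨Matrix.IsHermitian.fromBlocks hA.1 (by simp) hD.1, fun x hx0 => ?_⟩
  rw [Matrix.fromBlocks_mulVec]
  simp only [Matrix.zero_mulVec, add_zero, zero_add]
  have hx : star x = Sum.elim (star (x ∘ Sum.inl)) (star (x ∘ Sum.inr)) := by
    funext i; cases i <;> rfl
  rw [hx, sumElim_dotProduct_sumElim]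
  by_cases h1 : x ∘ Sum.inl = 0
  · have h2 : x ∘ Sum.inr ≠ 0 := by
      intro h2
      apply hx0
      funext i; cases i with
      | inl i => exact congrFun h1 i
      | inr i => exact congrFun h2 i
    have := hD.dotProduct_mulVec_pos h2
    have := hA.posSemidef.dotProduct_mulVec_nonneg (x ∘ Sum.inl)
    linarith
  · have := hA.dotProduct_mulVec_pos h1
    have := hD.posSemidef.dotProduct_mulVec_nonneg (x ∘ Sum.inr)
    linarith

private lemma bilin_comm' {m : Type*} [Fintype m] {M : Matrix m m ℝ}
    (hM : M.IsHermitian) (x y : m → ℝ) :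
    x ⬝ᵥ (M *ᵥ y) = y ⬝ᵥ (M *ᵥ x) := by
  have hT : Mᵀ = M := by
    ext i j
    have h := congrFun (congrFun hM.eq i) j
    simpa [Matrix.conjTranspose_apply] using h
  rw [dotProduct_mulVec, ← mulVec_transpose, hT, dotProduct_comm]

/-- `2β⟨x,My⟩ ≤ |β|⟨x,Mx⟩ + |β|⟨y,My⟩` for `M` PSD. -/
private lemma quad_ineq' {m : Type*} [Fintype m] {M : Matrix m m ℝ}
    (hM : M.PosSemidef) (β : ℝ) (x y : m → ℝ) :
    2*β*(x ⬝ᵥ (M *ᵥ y)) ≤ |β| * (x ⬝ᵥ (M *ᵥ x)) + |β| * (y ⬝ᵥ (M *ᵥ y)) := by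
  have hsymm := bilin_comm' hM.1 y x
  rcases le_or_gt 0 β with h | h
  · have h0 := hM.dotProduct_mulVec_nonneg (x - y)
    rw [star_trivial, mulVec_sub, dotProduct_sub, sub_dotProduct, sub_dotProduct] at h0
    rw [abs_of_nonneg h]
    nlinarith
  · have h0 := hM.dotProduct_mulVec_nonneg (x + y)
    rw [star_trivial, mulVec_add, dotProduct_add, add_dotProduct, add_dotProduct] at h0
    rw [abs_of_neg h]
    nlinarith

theorem stmt_10 (n : ℕ) (Kx Mx : Matrix (Fin n) (Fin n) ℝ)
    (hKx : Kx.PosDef) (hMx : Mx.PosDef) (α β : ℝ) (hα : 0 < α)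
    (𝒦 : Matrix (Fin n) (Fin n) ℝ) (h𝒦 : 𝒦 = Kx + α • Mx)
    (Abar P : Matrix (Fin n ⊕ Fin n) (Fin n ⊕ Fin n) ℝ)
    (hAbar : Abar = Matrix.fromBlocks 𝒦 (β • Mx) (β • Mx) (-𝒦))
    (hP : P = Matrix.fromBlocks (𝒦 + |β| • Mx) 0 0 (𝒦 + |β| • Mx)) :
    (∀ lam : ℝ, (∃ u : Fin n ⊕ Fin n → ℝ, u ≠ 0 ∧ Abar *ᵥ u = lam • (P *ᵥ u)) →
      1 / Real.sqrt 2 ≤ |lam| ∧ |lam| ≤ 1) ∧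
    (∀ lam mu : ℝ,
      (∃ u : Fin n ⊕ Fin n → ℝ, u ≠ 0 ∧ Abar *ᵥ u = lam • (P *ᵥ u)) →
      (∃ u : Fin n ⊕ Fin n → ℝ, u ≠ 0 ∧ Abar *ᵥ u = mu • (P *ᵥ u)) →
      |lam| ≤ Real.sqrt 2 * |mu|) := by
  have hstar : ∀ {k : Type} [Fintype k] (v : k → ℝ), star v = v := fun v => by
    funext i; exact star_trivial _
  set c : ℝ := |β| with hc
  have hc0 : 0 ≤ c := abs_nonneg β
  have hcb : c * c = β * β := abs_mul_abs_self β
  have hS : 𝒦.PosDef := by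
    rw [h𝒦]; exact hKx.add_posSemidef (psd_smul' hα.le hMx.posSemidef)
  set Q : Matrix (Fin n) (Fin n) ℝ := 𝒦 + c • Mx with hQdef
  have hQ : Q.PosDef := hS.add_posSemidef (psd_smul' hc0 hMx.posSemidef)
  have hQS : Q - 𝒦 = c • Mx := by rw [hQdef]; abel
  have hQu : IsUnit Q := hQ.isUnit
  have hQ1 : Q * Q⁻¹ = 1 := mul_nonsing_inv _ ((isUnit_iff_isUnit_det _).mp hQu)
  have hQ2 : Q⁻¹ * Q = 1 := nonsing_inv_mul _ ((isUnit_iff_isUnit_det _).mp hQu)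
  have hA1 : ∀ X : Matrix (Fin n) (Fin n) ℝ, Q * (Q⁻¹ * X) = X := by
    intro X; rw [← mul_assoc, hQ1, one_mul]
  have hA2 : ∀ X : Matrix (Fin n) (Fin n) ℝ, X * Q⁻¹ * Q = X := by
    intro X; rw [mul_assoc, hQ2, mul_one]
  have h𝒦Q : 𝒦 = Q - c • Mx := by rw [← hQS]; abel
  -- commutation identity
  have hMQK : Mx * Q⁻¹ * 𝒦 = 𝒦 * Q⁻¹ * Mx := by
    conv_lhs => rw [h𝒦Q]
    conv_rhs => rw [h𝒦Q]
    rw [mul_sub, sub_mul, sub_mul, mul_assoc Mx Q⁻¹ Q, hQ2, mul_one,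
      smul_mul_assoc, smul_mul_assoc, mul_smul_comm, hQ1, one_mul]
  have hcross : 𝒦 * Q⁻¹ * (β • Mx) = (β • Mx) * Q⁻¹ * 𝒦 := by
    simp only [smul_mul_assoc, mul_smul_comm, hMQK]
  -- the central block identity
  have hG : 𝒦 * Q⁻¹ * 𝒦 + (β • Mx) * Q⁻¹ * (β • Mx) - (2⁻¹ : ℝ) • Q =
      (2 : ℝ) • ((𝒦 - (2⁻¹ : ℝ) • Q) * Q⁻¹ * (𝒦 - (2⁻¹ : ℝ) • Q)) := by
    have hNN : (β • Mx) * Q⁻¹ * (β • Mx) = Q - 𝒦 - 𝒦 + 𝒦 * Q⁻¹ * 𝒦 := by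
      have h1 : (β • Mx) * Q⁻¹ * (β • Mx) = (β * β) • (Mx * Q⁻¹ * Mx) := by
        simp only [smul_mul_assoc, mul_smul_comm, smul_smul]
      have h2 : (Q - 𝒦) * Q⁻¹ * (Q - 𝒦) = (c * c) • (Mx * Q⁻¹ * Mx) := by
        rw [hQS]; simp only [smul_mul_assoc, mul_smul_comm, smul_smul]
      rw [h1, ← hcb, ← h2]
      rw [sub_mul, sub_mul, mul_sub, mul_sub, mul_assoc Q Q⁻¹, hQ2, mul_one,
        hA2, hQ1, one_mul]
      abel
    have hRR : (𝒦 - (2⁻¹ : ℝ) • Q) * Q⁻¹ * (𝒦 - (2⁻¹ : ℝ) • Q) =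
        𝒦 * Q⁻¹ * 𝒦 - (2⁻¹ : ℝ) • 𝒦 - (2⁻¹ : ℝ) • 𝒦 + (4⁻¹ : ℝ) • Q := by
      rw [sub_mul, sub_mul, mul_sub, mul_sub]
      simp only [smul_mul_assoc, mul_smul_comm, smul_smul, hA2, hA1]
      rw [hQ1, one_mul]
      match_scalars <;> norm_num
    rw [hNN, hRR]
    module
  -- inverse of P
  have hPinv : P⁻¹ = Matrix.fromBlocks Q⁻¹ 0 0 Q⁻¹ := by
    apply inv_eq_right_inv
    rw [hP, Matrix.fromBlocks_multiply]
    simp only [Matrix.mul_zero, Matrix.zero_mul, add_zero, zero_add, hQ1]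
    exact Matrix.fromBlocks_one
  have hPP : P⁻¹ * P = 1 := by
    rw [hPinv, hP, Matrix.fromBlocks_multiply]
    simp only [Matrix.mul_zero, Matrix.zero_mul, add_zero, zero_add, hQ2]
    exact Matrix.fromBlocks_one
  -- key PSD matrix for the lower bound
  have hkey : Abar * P⁻¹ * Abar - (2⁻¹ : ℝ) • P =
      Matrix.fromBlocks
        ((2 : ℝ) • ((𝒦 - (2⁻¹ : ℝ) • Q) * Q⁻¹ * (𝒦 - (2⁻¹ : ℝ) • Q))) 0 0
        ((2 : ℝ) • ((𝒦 - (2⁻¹ : ℝ) • Q) * Q⁻¹ * (𝒦 - (2⁻¹ : ℝ) • Q))) := by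
    have fbcongr : ∀ {A A' B B' C C' D D' : Matrix (Fin n) (Fin n) ℝ},
        A = A' → B = B' → C = C' → D = D' →
        Matrix.fromBlocks A B C D = Matrix.fromBlocks A' B' C' D' := by
      rintro A A' B B' C C' D D' rfl rfl rfl rfl; rfl
    rw [hPinv, hAbar, hP, Matrix.fromBlocks_multiply, ← hG]
    simp only [Matrix.mul_zero, Matrix.zero_mul, add_zero, zero_add]
    rw [Matrix.fromBlocks_multiply]
    rw [Matrix.fromBlocks_smul, sub_eq_add_neg, Matrix.fromBlocks_neg,
      Matrix.fromBlocks_add]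
    apply fbcongr
    · rw [sub_eq_add_neg]
    · simp [Matrix.neg_mul, Matrix.mul_neg, hcross, smul_mul_assoc, mul_smul_comm, hMQK]
    · simp [Matrix.neg_mul, Matrix.mul_neg, hcross, smul_mul_assoc, mul_smul_comm, hMQK]
    · simp only [Matrix.neg_mul, Matrix.mul_neg, neg_neg, smul_zero, neg_zero, add_zero]
      rw [sub_eq_add_neg, add_comm (𝒦 * Q⁻¹ * 𝒦)]
  have hkeyPSD : (Abar * P⁻¹ * Abar - (2⁻¹ : ℝ) • P).PosSemidef := by
    rw [hkey]
    have hR : (𝒦 - (2⁻¹ : ℝ) • Q)ᴴ = 𝒦 - (2⁻¹ : ℝ) • Q := by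
      rw [conjTranspose_sub, conjTranspose_smul, hS.1.eq, hQ.1.eq, star_trivial]
    have hblk : ((2 : ℝ) • ((𝒦 - (2⁻¹ : ℝ) • Q) * Q⁻¹ * (𝒦 - (2⁻¹ : ℝ) • Q))).PosSemidef := by
      apply psd_smul' (by norm_num)
      have := (hQ.inv).posSemidef.mul_mul_conjTranspose_same (𝒦 - (2⁻¹ : ℝ) • Q)
      rwa [hR] at this
    exact psd_blockDiag' hblk hblk
  -- P is positive definite
  have hPpd : P.PosDef := by rw [hP]; exact pd_blockDiag' hQ hQ
  -- helper : quadratic form of a block matrix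
  have hsplit : ∀ (A B C D : Matrix (Fin n) (Fin n) ℝ) (u : Fin n ⊕ Fin n → ℝ),
      u ⬝ᵥ (Matrix.fromBlocks A B C D *ᵥ u) =
        ((u ∘ Sum.inl) ⬝ᵥ (A *ᵥ (u ∘ Sum.inl)) + (u ∘ Sum.inl) ⬝ᵥ (B *ᵥ (u ∘ Sum.inr)))
        + ((u ∘ Sum.inr) ⬝ᵥ (C *ᵥ (u ∘ Sum.inl)) + (u ∘ Sum.inr) ⬝ᵥ (D *ᵥ (u ∘ Sum.inr))) := by
    intro A B C D u
    rw [Matrix.fromBlocks_mulVec]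
    conv_lhs => rw [← Sum.elim_comp_inl_inr u]
    rw [sumElim_dotProduct_sumElim, dotProduct_add, dotProduct_add]
    simp [Sum.elim_comp_inl, Sum.elim_comp_inr]
  -- |⟨u, Abar u⟩| ≤ ⟨u, P u⟩
  have hupper : ∀ u : Fin n ⊕ Fin n → ℝ, |u ⬝ᵥ (Abar *ᵥ u)| ≤ u ⬝ᵥ (P *ᵥ u) := by
    intro u
    set x := u ∘ Sum.inl
    set y := u ∘ Sum.inr
    have hq := quad_ineq' hMx.posSemidef β x y
    have hq2 := quad_ineq' hMx.posSemidef (-β) x y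
    rw [abs_neg] at hq2
    have hsx := hS.posSemidef.dotProduct_mulVec_nonneg x
    have hsy := hS.posSemidef.dotProduct_mulVec_nonneg y
    rw [hstar] at hsx hsy
    have hxy := bilin_comm' hMx.1 x y
    have hPf : u ⬝ᵥ (P *ᵥ u) =
        (x ⬝ᵥ (𝒦 *ᵥ x) + c * (x ⬝ᵥ (Mx *ᵥ x)))
        + (y ⬝ᵥ (𝒦 *ᵥ y) + c * (y ⬝ᵥ (Mx *ᵥ y))) := by
      rw [hP, hsplit]
      simp only [hQdef, Matrix.zero_mulVec, dotProduct_zero, add_zero, zero_add,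
        Matrix.add_mulVec, dotProduct_add, smul_mulVec, dotProduct_smul, smul_eq_mul]
      rfl
    have hAf : u ⬝ᵥ (Abar *ᵥ u) =
        (x ⬝ᵥ (𝒦 *ᵥ x) - y ⬝ᵥ (𝒦 *ᵥ y)) + 2 * β * (x ⬝ᵥ (Mx *ᵥ y)) := by
      rw [hAbar, hsplit]
      simp only [Matrix.neg_mulVec, dotProduct_neg, smul_mulVec,
        dotProduct_smul, smul_eq_mul]
      rw [bilin_comm' hMx.1 y x]
      ring
    rw [hPf, hAf, abs_le]
    constructor <;> · simp only [hc]; linarith [hq, hq2, hsx, hsy]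
  have hmain : ∀ lam : ℝ,
      (∃ u : Fin n ⊕ Fin n → ℝ, u ≠ 0 ∧ Abar *ᵥ u = lam • (P *ᵥ u)) →
      1 / Real.sqrt 2 ≤ |lam| ∧ |lam| ≤ 1 := by
    rintro lam ⟨u, hu0, hu⟩
    have hqP : 0 < u ⬝ᵥ (P *ᵥ u) := by
      have := hPpd.dotProduct_mulVec_pos hu0
      rwa [hstar] at this
    have hAq : u ⬝ᵥ (Abar *ᵥ u) = lam * (u ⬝ᵥ (P *ᵥ u)) := by
      rw [hu, dotProduct_smul, smul_eq_mul]
    constructor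
    · -- lower bound
      have hmv : (Abar * P⁻¹ * Abar) *ᵥ u = (lam * lam) • (P *ᵥ u) := by
        rw [← Matrix.mulVec_mulVec, ← Matrix.mulVec_mulVec, hu, Matrix.mulVec_smul,
          Matrix.mulVec_mulVec, hPP, Matrix.one_mulVec, Matrix.mulVec_smul, hu,
          smul_smul]
      have hPSDq := hkeyPSD.dotProduct_mulVec_nonneg u
      rw [hstar, Matrix.sub_mulVec, dotProduct_sub, hmv, dotProduct_smul,
        smul_mulVec, dotProduct_smul, smul_eq_mul, smul_eq_mul] at hPSDq
      have hlam2 : (2 : ℝ)⁻¹ ≤ lam ^ 2 := by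
        have h2 : 2⁻¹ * (u ⬝ᵥ (P *ᵥ u)) ≤ lam * lam * (u ⬝ᵥ (P *ᵥ u)) := by linarith
        have := (mul_le_mul_iff_left₀ hqP).mp h2
        nlinarith
      calc 1 / Real.sqrt 2 = Real.sqrt 2⁻¹ := by
            rw [Real.sqrt_inv, one_div]
        _ ≤ Real.sqrt (lam ^ 2) := Real.sqrt_le_sqrt hlam2
        _ = |lam| := Real.sqrt_sq_eq_abs lam
    · -- upper bound
      have := hupper u
      rw [hAq, abs_mul, abs_of_pos hqP] at this
      have h1 : |lam| * (u ⬝ᵥ (P *ᵥ u)) ≤ 1 * (u ⬝ᵥ (P *ᵥ u)) := by linarith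
      exact le_of_mul_le_mul_right (by linarith) hqP
  refine ⟨hmain, fun lam mu h1 h2 => ?_⟩
  have hl := (hmain lam h1).2
  have hm := (hmain mu h2).1
  have h2pos : (0 : ℝ) < Real.sqrt 2 := Real.sqrt_pos.mpr (by norm_num)
  calc |lam| ≤ 1 := hl
    _ = Real.sqrt 2 * (1 / Real.sqrt 2) := by field_simp
    _ ≤ Real.sqrt 2 * |mu| := mul_le_mul_of_nonneg_left hm h2pos.le
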